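/- Let q be a prime power and let V = F_q^(2n) carry a non-degenerate symplectic form f. Let j, ℓ be integers with max{0, j−n+1} ≤ ℓ ≤ j/2 and j ≤ 2n−2, and let π be a (j−2ℓ)-singular j-dimensional subspace of V. Then the number of non-singular (2n−2)-dimensional subspaces of V containing π equals q^(2(n−ℓ−1)) · (q^(2(n−j+ℓ)) − 1)/(q² − 1). -/

import Mathlib

/-- `ψ⁻_{a,b}(Q) = ∏_{k=a}^{b} (Q^k − 1)`, the empty product (b = a−1) being 1. -/
def psiMinus (Q : ℚ) (a b : ℕ) : ℚ := ∏ k ∈ Finset.Icc a b, (Q ^ k - 1)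

/-- `χ_{a,b}(q) = ∏_{k=a}^{b} (q^(2k−1) − 1)`, the empty product (b = a−1) being 1. -/
def chiF (q : ℚ) (a b : ℕ) : ℚ := ∏ k ∈ Finset.Icc a b, (q ^ (2 * k - 1) - 1)

/-- The Gaussian binomial coefficient `[b choose a]_Q = ψ⁻_{b−a+1,b}(Q)/ψ⁻_{1,a}(Q)`,
set to 0 if `b < a` (the case `a < 0` cannot occur for natural `a`). -/
def gauss (Q : ℚ) (b a : ℕ) : ℚ :=
  if a ≤ b then psiMinus Q (b - a + 1) b / psiMinus Q 1 a else 0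

/-- The dimension of the radical `{w ∈ W : f(w,u) = 0 for all u ∈ W}` of a subspace `W`
with respect to the form `f`.  (For a reflexive bilinear form this set is itself a
subspace, so taking the span does not change it.) -/
noncomputable def radDim {K V : Type} [Field K] [AddCommGroup V] [Module K V]
    (f : V → V → K) (W : Submodule K V) : ℕ :=
  Module.finrank K (Submodule.span K {w : V | w ∈ W ∧ ∀ u ∈ W, f w u = 0})

/-- `f` is a non-degenerate symplectic (alternating) form: bilinear, `f(v,v) = 0`,
and non-degenerate. -/
def IsSymplecticForm {K V : Type} [Field K] [AddCommGroup V] [Module K V]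
    (f : V → V → K) : Prop :=
  (∀ u v w : V, f (u + v) w = f u w + f v w) ∧
  (∀ u v w : V, f u (v + w) = f u v + f u w) ∧
  (∀ (a : K) (v w : V), f (a • v) w = a * f v w) ∧
  (∀ (a : K) (v w : V), f v (a • w) = a * f v w) ∧
  (∀ v : V, f v v = 0) ∧
  (∀ v : V, (∀ w : V, f v w = 0) → v = 0)


open Module LinearMap Submodule

section Aux
variable {K : Type} [Field K] [Fintype K] {V : Type} [AddCommGroup V] [Module K V]
  [Fintype V] [FiniteDimensional K V]

lemma aux_functional (φ : V →ₗ[K] K) (hφ : φ ≠ 0) :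
    Nat.card {x : V // φ x = 1} = Fintype.card K ^ (Module.finrank K V - 1) := by
  classical
  obtain ⟨y, hy⟩ : ∃ y, φ y ≠ 0 := by
    by_contra h; push_neg at h; exact hφ (by ext x; simp [h x])
  set x₀ : V := (φ y)⁻¹ • y with hx₀
  have hφx₀ : φ x₀ = 1 := by simp [hx₀, inv_mul_cancel₀ hy]
  have e : {x : V // φ x = 1} ≃ LinearMap.ker φ :=
    { toFun := fun x => ⟨x.1 - x₀, by simp [x.2, hφx₀]⟩
      invFun := fun z => ⟨z.1 + x₀, by have := z.2; simp only [LinearMap.mem_ker] at this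
                                       simp [this, hφx₀]⟩
      left_inv := fun x => by ext; simp
      right_inv := fun z => by ext; simp }
  have hsurj : Function.Surjective φ := fun c => ⟨c • x₀, by simp [hφx₀]⟩
  have hrange : LinearMap.range φ = ⊤ := LinearMap.range_eq_top.mpr hsurj
  have hker : Module.finrank K (LinearMap.ker φ) = Module.finrank K V - 1 := by
    have h1 := LinearMap.finrank_range_add_finrank_ker φ
    rw [hrange, finrank_top, finrank_self] at h1
    omega
  rw [Nat.card_congr e, Nat.card_eq_fintype_card, card_eq_pow_finrank (K := K), hker]


lemma aux_pairs (B : LinearMap.BilinForm K V) (hB : B.IsAlt) (W : Submodule K V) :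
    Nat.card {x : V × V // x.1 ∈ W ∧ x.2 ∈ W ∧ B x.1 x.2 = 1}
      = (Fintype.card K ^ Module.finrank K W
          - Fintype.card K ^ Module.finrank K ↥(W ⊓ B.orthogonal W))
        * Fintype.card K ^ (Module.finrank K W - 1) := by
  classical
  set q := Fintype.card K
  have hRefl := hB.isRefl
  have e : {x : V × V // x.1 ∈ W ∧ x.2 ∈ W ∧ B x.1 x.2 = 1}
      ≃ Σ v : W, {w : W // B v.1 w.1 = 1} :=
    { toFun := fun x => ⟨⟨x.1.1, x.2.1⟩, ⟨x.1.2, x.2.2.1⟩, x.2.2.2⟩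
      invFun := fun s => ⟨(s.1.1, s.2.1.1), s.1.2, s.2.1.2, s.2.2⟩
      left_inv := fun x => rfl
      right_inv := fun s => rfl }
  have hfib : ∀ v : W, Fintype.card {w : W // B v.1 w.1 = 1}
      = if (v : V) ∈ B.orthogonal W then 0 else q ^ (Module.finrank K W - 1) := by
    intro v
    by_cases hv : (v : V) ∈ B.orthogonal W
    · rw [if_pos hv, Fintype.card_eq_zero_iff]
      refine ⟨fun w => ?_⟩
      have h0 : B w.1.1 v.1 = 0 := hv w.1.1 w.1.2
      have := hRefl _ _ h0
      rw [w.2] at this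
      exact one_ne_zero this
    · rw [if_neg hv]
      set φ : W →ₗ[K] K := (B v.1).comp W.subtype with hφdef
      have hφ : φ ≠ 0 := by
        rw [LinearMap.BilinForm.mem_orthogonal_iff] at hv
        push_neg at hv
        obtain ⟨u, hu, hBu⟩ := hv
        have hBu' : B u v.1 ≠ 0 := hBu
        have hvu : B v.1 u ≠ 0 := fun h0 => hBu' (hRefl _ _ h0)
        intro h0
        exact hvu (by simpa [hφdef] using congrArg (fun ψ : W →ₗ[K] K => ψ ⟨u, hu⟩) h0)
      have := aux_functional φ hφ
      rw [Nat.card_eq_fintype_card] at this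
      rw [← this]
      apply Fintype.card_congr
      exact Equiv.subtypeEquivRight (fun w => by simp [hφdef])
  have hcount : Nat.card {x : V × V // x.1 ∈ W ∧ x.2 ∈ W ∧ B x.1 x.2 = 1}
      = ∑ v : W, Fintype.card {w : W // B v.1 w.1 = 1} := by
    rw [Nat.card_congr e, Nat.card_eq_fintype_card, Fintype.card_sigma]
  rw [hcount]
  simp only [hfib]
  rw [Finset.sum_ite, Finset.sum_const, Finset.sum_const, smul_eq_mul, smul_eq_mul,
    mul_zero, zero_add]
  have hW : Fintype.card W = q ^ Module.finrank K W := card_eq_pow_finrank (K := K)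
  have hR : (Finset.univ.filter (fun v : W => (v : V) ∈ B.orthogonal W)).card
      = q ^ Module.finrank K ↥(W ⊓ B.orthogonal W) := by
    rw [← Fintype.card_subtype]
    have e2 : {v : W // (v : V) ∈ B.orthogonal W} ≃ ↥(W ⊓ B.orthogonal W) :=
      { toFun := fun v => ⟨v.1.1, v.1.2, v.2⟩
        invFun := fun x => ⟨⟨x.1, x.2.1⟩, x.2.2⟩
        left_inv := fun v => rfl
        right_inv := fun x => rfl }
    rw [Fintype.card_congr e2, card_eq_pow_finrank (K := K)]
  have hsplit := Finset.card_filter_add_card_filter_not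
    (s := (Finset.univ : Finset W)) (p := fun v : W => (v : V) ∈ B.orthogonal W)
  replace hsplit : (Finset.filter (fun v : W => (v : V) ∈ B.orthogonal W) Finset.univ).card
      + (Finset.filter (fun v : W => (v : V) ∉ B.orthogonal W) Finset.univ).card
      = Finset.univ.card := hsplit
  rw [Finset.card_univ, hW, hR] at hsplit
  congr 1
  omega

lemma aux_lines (B : LinearMap.BilinForm K V) (hB : B.IsAlt) (W : Submodule K V) :
    Nat.card {H : Submodule K V // H ≤ W ∧ Module.finrank K ↥H = 2 ∧ H ⊓ B.orthogonal H = ⊥}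
        * ((Fintype.card K ^ 2 - 1) * Fintype.card K)
      = Nat.card {x : V × V // x.1 ∈ W ∧ x.2 ∈ W ∧ B x.1 x.2 = 1} := by
  classical
  set q := Fintype.card K with hqdef
  have hRefl := hB.isRefl
  letI : Fintype (Submodule K V) := Fintype.ofFinite _
  have key : ∀ v w : V, B v w = 1 →
      Module.finrank K ↥(Submodule.span K {v, w}) = 2 ∧
      Submodule.span K {v, w} ⊓ B.orthogonal (Submodule.span K {v, w}) = ⊥ := by
    intro v w h1
    have hli : LinearIndependent K ![v, w] := by
      rw [LinearIndependent.pair_iff]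
      intro s t hst
      have h0 : B (s • v + t • w) w = 0 := by rw [hst]; simp
      have h0' : B v (s • v + t • w) = 0 := by rw [hst]; simp
      simp only [map_add, map_smul, LinearMap.add_apply, LinearMap.smul_apply,
        smul_eq_mul, h1, hB v, hB w, mul_zero, mul_one, add_zero, zero_add] at h0 h0'
      exact ⟨h0, h0'⟩
    have hrange : Set.range ![v, w] = {v, w} := by
      ext y
      simp only [Set.mem_range, Fin.exists_fin_two, Set.mem_insert_iff, Set.mem_singleton_iff]
      constructor
      · rintro (rfl | rfl) <;> simp
      · rintro (rfl | rfl) <;> simp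
    have hfr : Module.finrank K ↥(Submodule.span K {v, w}) = 2 := by
      rw [← hrange, finrank_span_eq_card hli]
      simp
    refine ⟨hfr, ?_⟩
    rw [eq_bot_iff]
    intro x hx
    obtain ⟨hx1, hx2⟩ := Submodule.mem_inf.mp hx
    obtain ⟨a, b, hab⟩ := Submodule.mem_span_pair.mp hx1
    have hvmem : v ∈ Submodule.span K ({v, w} : Set V) :=
      Submodule.subset_span (by simp)
    have hwmem : w ∈ Submodule.span K ({v, w} : Set V) :=
      Submodule.subset_span (by simp)
    have hbv : B v x = 0 := hx2 v hvmem
    have hbw : B w x = 0 := hx2 w hwmem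
    have hvw' : B w v = -1 := by
      have h := LinearMap.IsAlt.neg hB v w
      rw [h1] at h
      exact h.symm
    rw [← hab] at hbv hbw
    simp only [map_add, map_smul, smul_eq_mul, h1, hB v, hB w, hvw',
      mul_zero, mul_one, zero_add, add_zero, mul_neg] at hbv hbw
    have ha : a = 0 := neg_eq_zero.mp hbw
    have hb : b = 0 := hbv
    simp [← hab, ha, hb]
  let g : {x : V × V // x.1 ∈ W ∧ x.2 ∈ W ∧ B x.1 x.2 = 1} →
      {H : Submodule K V // H ≤ W ∧ Module.finrank K ↥H = 2 ∧ H ⊓ B.orthogonal H = ⊥} :=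
    fun x =>
    ⟨Submodule.span K {x.1.1, x.1.2},
      Submodule.span_le.mpr (by
        rw [Set.insert_subset_iff, Set.singleton_subset_iff]
        exact ⟨x.2.1, x.2.2.1⟩),
      (key _ _ x.2.2.2).1, (key _ _ x.2.2.2).2⟩
  have hgval : ∀ x, (g x).1 = Submodule.span K {x.1.1, x.1.2} := fun x => rfl
  have hfib : ∀ H : {H : Submodule K V //
        H ≤ W ∧ Module.finrank K ↥H = 2 ∧ H ⊓ B.orthogonal H = ⊥},
      Fintype.card {x // g x = H}
        = Nat.card {y : V × V // y.1 ∈ H.1 ∧ y.2 ∈ H.1 ∧ B y.1 y.2 = 1} := by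
    intro H
    rw [Nat.card_eq_fintype_card]
    apply Fintype.card_congr
    have hmem : ∀ x, g x = H → x.1.1 ∈ H.1 ∧ x.1.2 ∈ H.1 := by
      intro x h
      have hsp : Submodule.span K {x.1.1, x.1.2} = H.1 := by
        rw [← hgval x, h]
      constructor
      · rw [← hsp]; exact Submodule.subset_span (by simp)
      · rw [← hsp]; exact Submodule.subset_span (by simp)
    have hspan : ∀ (y : V × V), y.1 ∈ H.1 → y.2 ∈ H.1 → B y.1 y.2 = 1 →
        Submodule.span K {y.1, y.2} = H.1 := by
      intro y hy1 hy2 hy3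
      apply Submodule.eq_of_le_of_finrank_le
      · exact Submodule.span_le.mpr (by
          rw [Set.insert_subset_iff, Set.singleton_subset_iff]
          exact ⟨hy1, hy2⟩)
      · rw [H.2.2.1, (key _ _ hy3).1]
    exact
      { toFun := fun x => ⟨x.1.1, (hmem x.1 x.2).1, (hmem x.1 x.2).2, x.1.2.2.2⟩
        invFun := fun y =>
          ⟨⟨y.1, H.2.1 y.2.1, H.2.1 y.2.2.1, y.2.2.2⟩,
            Subtype.ext (hspan y.1 y.2.1 y.2.2.1 y.2.2.2)⟩
        left_inv := fun x => by
          apply Subtype.ext; apply Subtype.ext; rfl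
        right_inv := fun y => rfl }
  have hcard : Nat.card {x : V × V // x.1 ∈ W ∧ x.2 ∈ W ∧ B x.1 x.2 = 1}
      = ∑ H : {H : Submodule K V //
          H ≤ W ∧ Module.finrank K ↥H = 2 ∧ H ⊓ B.orthogonal H = ⊥},
        Fintype.card {x // g x = H} := by
    rw [Nat.card_eq_fintype_card, ← Fintype.card_sigma]
    exact Fintype.card_congr (Equiv.sigmaFiberEquiv g).symm
  have hfibval : ∀ H : {H : Submodule K V //
        H ≤ W ∧ Module.finrank K ↥H = 2 ∧ H ⊓ B.orthogonal H = ⊥},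
      Fintype.card {x // g x = H} = (q ^ 2 - 1) * q := by
    intro H
    rw [hfib H, aux_pairs B hB H.1, H.2.2.1, H.2.2.2]
    simp
    rfl
  rw [hcard]
  simp only [hfibval]
  rw [Finset.sum_const, smul_eq_mul, Finset.card_univ, Nat.card_eq_fintype_card]


lemma radDim_eq (B : LinearMap.BilinForm K V) (hRefl : B.IsRefl)
    (f : V → V → K) (hfB : ∀ v w, f v w = B v w) (W : Submodule K V) :
    radDim f W = Module.finrank K ↥(W ⊓ B.orthogonal W) := by
  unfold radDim
  have hset : {w : V | w ∈ W ∧ ∀ u ∈ W, f w u = 0} = ↑(W ⊓ B.orthogonal W) := by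
    ext x
    simp only [Set.mem_setOf_eq, SetLike.mem_coe, Submodule.mem_inf,
      LinearMap.BilinForm.mem_orthogonal_iff]
    constructor
    · rintro ⟨hxW, h⟩
      refine ⟨hxW, fun n hn => ?_⟩
      have := h n hn
      rw [hfB] at this
      exact hRefl _ _ this
    · rintro ⟨hxW, h⟩
      refine ⟨hxW, fun u hu => ?_⟩
      rw [hfB]
      exact hRefl _ _ (h u hu)
  rw [hset, Submodule.span_eq]

end Aux

theorem symplectic_beta_codim2
    (p t q : ℕ) (hp : p.Prime) (ht : 0 < t) (hq : q = p ^ t)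
    (K : Type) [Field K] [Fintype K] (hK : Fintype.card K = q)
    (n : ℕ)
    (f : (Fin (2 * n) → K) → (Fin (2 * n) → K) → K) (hf : IsSymplecticForm f)
    (j ℓ : ℕ) (hℓ1 : j + 1 ≤ n + ℓ) (hℓ2 : 2 * ℓ ≤ j) (hj : j ≤ 2 * n - 2)
    (π : Submodule K (Fin (2 * n) → K))
    (hπd : Module.finrank K π = j) (hπs : radDim f π = j - 2 * ℓ) :
    (Nat.card {σ : Submodule K (Fin (2 * n) → K) //
        π ≤ σ ∧ Module.finrank K σ = 2 * n - 2 ∧ radDim f σ = 0} : ℚ) =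
      (q : ℚ) ^ (2 * (n - ℓ - 1)) *
        (((q : ℚ) ^ (2 * (n + ℓ - j)) - 1) / ((q : ℚ) ^ 2 - 1)) := by
  classical
  obtain ⟨h1, h2, h3, h4, h5, h6⟩ := hf
  have h3' : ∀ (a : K) (v w : Fin (2 * n) → K), f (a • v) w = a • f v w := fun a v w => by
    rw [smul_eq_mul]; exact h3 a v w
  have h4' : ∀ (a : K) (v w : Fin (2 * n) → K), f v (a • w) = a • f v w := fun a v w => by
    rw [smul_eq_mul]; exact h4 a v w
  set B : LinearMap.BilinForm K (Fin (2 * n) → K) :=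
    LinearMap.mk₂ K f h1 h3' h2 h4' with hBdef
  have hfB : ∀ v w : Fin (2 * n) → K, f v w = B v w := fun v w => rfl
  have hAlt : B.IsAlt := fun v => h5 v
  have hRefl : B.IsRefl := hAlt.isRefl
  have hNd : B.Nondegenerate := hRefl.nondegenerate_iff_separatingLeft.mpr (fun v hv => h6 v hv)
  have hn : 1 ≤ n := by omega
  have hV : Module.finrank K (Fin (2 * n) → K) = 2 * n := Module.finrank_fin_fun K
  -- translate the radical conditions
  have hrad : ∀ σ : Submodule K (Fin (2 * n) → K),
      radDim f σ = 0 ↔ σ ⊓ B.orthogonal σ = ⊥ := by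
    intro σ
    rw [radDim_eq B hRefl f hfB, Submodule.finrank_eq_zero]
  set W := B.orthogonal π with hWdef
  have e1 : {σ : Submodule K (Fin (2 * n) → K) //
        π ≤ σ ∧ Module.finrank K σ = 2 * n - 2 ∧ radDim f σ = 0}
      ≃ {σ : Submodule K (Fin (2 * n) → K) //
        π ≤ σ ∧ Module.finrank K σ = 2 * n - 2 ∧ σ ⊓ B.orthogonal σ = ⊥} :=
    Equiv.subtypeEquivRight (fun σ =>
      and_congr_right (fun _ => and_congr_right (fun _ => hrad σ)))
  have e2 : {σ : Submodule K (Fin (2 * n) → K) //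
        π ≤ σ ∧ Module.finrank K σ = 2 * n - 2 ∧ σ ⊓ B.orthogonal σ = ⊥}
      ≃ {H : Submodule K (Fin (2 * n) → K) //
        H ≤ W ∧ Module.finrank K ↥H = 2 ∧ H ⊓ B.orthogonal H = ⊥} :=
    { toFun := fun σ =>
        ⟨B.orthogonal σ.1, LinearMap.BilinForm.orthogonal_le σ.2.1,
          by rw [LinearMap.BilinForm.finrank_orthogonal hNd, hV, σ.2.2.1]; omega,
          by rw [LinearMap.BilinForm.orthogonal_orthogonal hNd hRefl, inf_comm]
             exact σ.2.2.2⟩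
      invFun := fun H =>
        ⟨B.orthogonal H.1,
          le_trans (LinearMap.BilinForm.le_orthogonal_orthogonal hRefl)
            (LinearMap.BilinForm.orthogonal_le H.2.1),
          by rw [LinearMap.BilinForm.finrank_orthogonal hNd, hV, H.2.2.1],
          by rw [LinearMap.BilinForm.orthogonal_orthogonal hNd hRefl, inf_comm]
             exact H.2.2.2⟩
      left_inv := fun σ => Subtype.ext
        (LinearMap.BilinForm.orthogonal_orthogonal hNd hRefl σ.1)
      right_inv := fun H => Subtype.ext
        (LinearMap.BilinForm.orthogonal_orthogonal hNd hRefl H.1) }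
  -- dimensions of W and its radical
  have hd : Module.finrank K ↥W = 2 * n - j := by
    rw [hWdef, LinearMap.BilinForm.finrank_orthogonal hNd, hV, hπd]
  have hr : Module.finrank K ↥(W ⊓ B.orthogonal W) = j - 2 * ℓ := by
    rw [← hπs, radDim_eq B hRefl f hfB, hWdef,
      LinearMap.BilinForm.orthogonal_orthogonal hNd hRefl, inf_comm]
  -- counting
  have hcount := aux_lines B hAlt W
  rw [aux_pairs B hAlt W, hd, hr, hK] at hcount
  rw [Nat.card_congr (e1.trans e2)]
  set m := n + ℓ - j with hm
  set s := n - ℓ - 1 with hs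
  set N := Nat.card {H : Submodule K (Fin (2 * n) → K) //
      H ≤ W ∧ Module.finrank K ↥H = 2 ∧ H ⊓ B.orthogonal H = ⊥} with hN
  set r0 := j - 2 * ℓ with hr0
  clear_value N
  clear hrad e1 e2 hπs hπd hfB hAlt hRefl hNd hV hd hr hBdef hWdef hN
  clear W B h1 h2 h3 h4 h5 h6 h3' h4' π f
  have hq2 : 2 ≤ q := by
    rw [hq]
    calc 2 = 2 ^ 1 := by norm_num
    _ ≤ p ^ 1 := by exact Nat.pow_le_pow_left hp.two_le 1
    _ ≤ p ^ t := Nat.pow_le_pow_right hp.pos ht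
  have hed : 2 * n - j = r0 + 2 * m := by omega
  rw [hed] at hcount
  obtain ⟨d1, hd1, hd2⟩ : ∃ d1, r0 + 2 * m - 1 = d1 ∧ r0 + d1 = 2 * s + 1 :=
    ⟨_, rfl, by omega⟩
  rw [hd1] at hcount
  have hq0 : 0 < q := by omega
  have hle : q ^ r0 ≤ q ^ (r0 + 2 * m) := Nat.pow_le_pow_right hq0 (by omega)
  have hle1 : 1 ≤ q ^ 2 := Nat.one_le_pow _ _ hq0
  have hQ := congrArg (fun x : ℕ => (x : ℚ)) hcount
  push_cast [Nat.cast_sub hle1, Nat.cast_sub hle] at hQ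
  have hq0' : (q : ℚ) ≠ 0 := by positivity
  have h2q : (2 : ℚ) ≤ (q : ℚ) := by exact_mod_cast hq2
  have hq21 : (q : ℚ) ^ 2 - 1 ≠ 0 := by nlinarith
  have hpow : (q : ℚ) ^ r0 * (q : ℚ) ^ d1 = (q : ℚ) ^ (2 * s) * q := by
    rw [← pow_add, hd2, pow_succ]
  have key : (N : ℚ) * ((q : ℚ) ^ 2 - 1) = (q : ℚ) ^ (2 * s) * ((q : ℚ) ^ (2 * m) - 1) :=
    mul_right_cancel₀ hq0' (by linear_combination hQ + ((q : ℚ) ^ (2 * m) - 1) * hpow)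
  rw [← mul_div_assoc, eq_div_iff hq21]
  exact key
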